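/- Every univalent updown category C has a universal cover: the category C̃ whose rank-n objects are strings (f_1, ..., f_n) of composable morphisms between adjacent ranks starting at 0̂, and whose morphisms are inclusions of initial substrings, admits a covering map π: C̃ → C, and for any other covering map φ: C' → C there exists a covering map ψ: C̃ → C' with π = φ∘ψ. -/

import Mathlib

structure UDData where
  Obj : Type
  Hom : Obj → Obj → Type
  idm : ∀ p, Hom p p
  comp : ∀ {p q r : Obj}, Hom p q → Hom q r → Hom p r
  idm_comp : ∀ {p q : Obj} (f : Hom p q), comp (idm p) f = f
  comp_idm : ∀ {p q : Obj} (f : Hom p q), comp f (idm q) = f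
  comp_assoc : ∀ {p q r s : Obj} (f : Hom p q) (g : Hom q r) (h : Hom r s),
    comp (comp f g) h = comp f (comp g h)
  rank : Obj → ℕ
  zhat : Obj

namespace UDData

def cast {C : UDData} {p q q' : C.Obj} (h : q = q') (f : C.Hom p q) : C.Hom p q' := h ▸ f

def Chain (C : UDData) : ℕ → C.Obj → C.Obj → Type
  | 0, p, q => PLift (p = q)
  | n + 1, p, q => (r : C.Obj) × C.Chain n p r × {f : C.Hom r q // C.rank q = C.rank r + 1}

structure IsUpdown (C : UDData) : Prop where
  rank_finite : ∀ n : ℕ, {p : C.Obj | C.rank p = n}.Finite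
  hom_finite : ∀ p q : C.Obj, Finite (C.Hom p q)
  rank_zhat : C.rank C.zhat = 0
  zhat_unique : ∀ p : C.Obj, C.rank p = 0 → p = C.zhat
  from_zhat : ∀ p : C.Obj, Nonempty (C.Hom C.zhat p)
  hom_rank : ∀ p q : C.Obj, Nonempty (C.Hom p q) → C.rank p < C.rank q ∨ p = q
  aut_inv : ∀ (p : C.Obj) (f : C.Hom p p),
    ∃ g : C.Hom p p, C.comp f g = C.idm p ∧ C.comp g f = C.idm p
  factor : ∀ {p q : C.Obj} (f : C.Hom p q), C.rank p < C.rank q →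
    ∃ (r : C.Obj) (g : C.Hom p r) (h : C.Hom r q),
      C.rank r = C.rank p + 1 ∧ C.comp g h = f
  pre_free : ∀ {p q : C.Obj}, C.rank q = C.rank p + 1 → ∀ (a : C.Hom p p) (f : C.Hom p q),
    C.comp a f = f → a = C.idm p
  post_free : ∀ {p q : C.Obj}, C.rank q = C.rank p + 1 → ∀ (b : C.Hom q q) (f : C.Hom p q),
    C.comp f b = f → b = C.idm q

variable (C : UDData)

noncomputable def nAut (p : C.Obj) : ℕ := Nat.card (C.Hom p p)

noncomputable def u (p q : C.Obj) : ℕ := Nat.card (C.Hom p q) / C.nAut q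

noncomputable def d (p q : C.Obj) : ℕ := Nat.card (C.Hom p q) / C.nAut p

noncomputable def uStep (p q : C.Obj) : ℕ := if C.rank q = C.rank p + 1 then C.u p q else 0

noncomputable def dStep (p q : C.Obj) : ℕ := if C.rank q = C.rank p + 1 then C.d p q else 0

open Classical in
noncomputable def uext (C : UDData) : ℕ → C.Obj → C.Obj → ℕ
  | 0, p, q => if p = q then 1 else 0
  | n + 1, p, q => ∑ᶠ r : C.Obj, C.uext n p r * C.uStep r q

open Classical in
noncomputable def dext (C : UDData) : ℕ → C.Obj → C.Obj → ℕ
  | 0, p, q => if p = q then 1 else 0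
  | n + 1, p, q => ∑ᶠ r : C.Obj, C.dext n p r * C.dStep r q

noncomputable def uE (p q : C.Obj) : ℕ := C.uext (C.rank q - C.rank p) p q

noncomputable def dE (p q : C.Obj) : ℕ := C.dext (C.rank q - C.rank p) p q

def Univalent (C : UDData) : Prop := ∀ p : C.Obj, Subsingleton (C.Hom p p)

def Simple (C : UDData) : Prop :=
  (∀ p q : C.Obj, Subsingleton (C.Hom p q)) ∧
    ∀ (n : ℕ) (p q : C.Obj), Subsingleton (C.Chain n p q)

def EUC (C : UDData) (u : ℕ → ℕ) : Prop :=
  ∀ p : C.Obj, (∑ᶠ q : C.Obj, C.uStep p q) = u (C.rank p)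

def EDC (C : UDData) (d : ℕ → ℕ) : Prop :=
  ∀ p : C.Obj, (∑ᶠ q : C.Obj, C.dStep q p) = d (C.rank p)

def Factorial (C : UDData) : Prop :=
  ∀ p : C.Obj, (∑ᶠ q : C.Obj, C.dStep q p) = C.rank p

def prod (C D : UDData) : UDData where
  Obj := C.Obj × D.Obj
  Hom := fun p q => C.Hom p.1 q.1 × D.Hom p.2 q.2
  idm := fun p => (C.idm p.1, D.idm p.2)
  comp := fun f g => (C.comp f.1 g.1, D.comp f.2 g.2)
  idm_comp := by intro p q f; cases f; simp [C.idm_comp, D.idm_comp]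
  comp_idm := by intro p q f; cases f; simp [C.comp_idm, D.comp_idm]
  comp_assoc := by intro p q r s f g h; simp [C.comp_assoc, D.comp_assoc]
  rank := fun p => C.rank p.1 + D.rank p.2
  zhat := (C.zhat, D.zhat)

structure Mor (C D : UDData) where
  obj : C.Obj → D.Obj
  map : ∀ {p q : C.Obj}, C.Hom p q → D.Hom (obj p) (obj q)
  map_idm : ∀ p : C.Obj, map (C.idm p) = D.idm (obj p)
  map_comp : ∀ {p q r : C.Obj} (f : C.Hom p q) (g : C.Hom q r),
    map (C.comp f g) = D.comp (map f) (map g)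
  rank_eq : ∀ p : C.Obj, D.rank (obj p) = C.rank p

def Mor.comp {C D E : UDData} (F : Mor C D) (G : Mor D E) : Mor C E where
  obj := fun p => G.obj (F.obj p)
  map := fun f => G.map (F.map f)
  map_idm := by intro p; show G.map (F.map (C.idm p)) = _; rw [F.map_idm, G.map_idm]
  map_comp := by
    intro p q r f g
    show G.map (F.map (C.comp f g)) = E.comp (G.map (F.map f)) (G.map (F.map g))
    rw [F.map_comp, G.map_comp]
  rank_eq := by intro p; rw [G.rank_eq, F.rank_eq]

structure Mor.IsGood {C D : UDData} (F : Mor C D) : Prop where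
  aut_inj : ∀ p : C.Obj, Function.Injective fun a : C.Hom p p => F.map a
  pre_quot_inj : ∀ {p q₁ q₂ : C.Obj} (f₁ : C.Hom p q₁) (f₂ : C.Hom p q₂),
    C.rank q₁ = C.rank p + 1 → C.rank q₂ = C.rank p + 1 →
    ∀ h : F.obj q₁ = F.obj q₂,
      (∃ a : D.Hom (F.obj p) (F.obj p),
        D.comp a (UDData.cast h (F.map f₁)) = F.map f₂) →
      ∃ e : q₁ = q₂, ∃ a : C.Hom p p, C.comp a (UDData.cast e f₁) = f₂
  post_quot_inj : ∀ {p q₁ q₂ : C.Obj} (f₁ : C.Hom p q₁) (f₂ : C.Hom p q₂),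
    C.rank q₁ = C.rank p + 1 → C.rank q₂ = C.rank p + 1 →
    ∀ h : F.obj q₁ = F.obj q₂,
      (∃ b : D.Hom (F.obj q₂) (F.obj q₂),
        D.comp (UDData.cast h (F.map f₁)) b = F.map f₂) →
      ∃ e : q₁ = q₂, ∃ b : C.Hom q₂ q₂, C.comp (UDData.cast e f₁) b = f₂

def Mor.IsCovering {C' C : UDData} (F : Mor C' C) : Prop :=
  Function.Surjective F.obj ∧
    ∀ p q : C'.Obj, C'.rank q = C'.rank p + 1 →
      Function.Bijective fun x : (q' : {q' : C'.Obj // F.obj q' = F.obj q}) × C'.Hom p q'.1 =>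
        UDData.cast x.1.2 (F.map x.2)

noncomputable def objCoeff (n : ℕ) : ℚ :=
  ∑ᶠ p : C.Obj, if C.rank p = n then ((C.nAut p : ℚ))⁻¹ else 0

noncomputable def objGF : PowerSeries ℚ := PowerSeries.mk C.objCoeff

noncomputable def morGF : PowerSeries ℚ :=
  PowerSeries.mk fun n =>
    ∑ᶠ p : C.Obj, ∑ᶠ q : C.Obj,
      if C.rank p + C.rank q = n then (C.uStep p q : ℚ) * ((C.nAut p : ℚ))⁻¹ else 0

noncomputable def sqSub (f : PowerSeries ℚ) : PowerSeries ℚ :=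
  PowerSeries.mk fun n => if 2 ∣ n then PowerSeries.coeff (R := ℚ) (n / 2) f else 0

noncomputable def coverCard (n : ℕ) : ℕ := Nat.card ((q : C.Obj) × C.Chain n C.zhat q)

noncomputable def inprod (f g : C.Obj → ℚ) : ℚ := ∑ᶠ p : C.Obj, f p * g p * C.nAut p

noncomputable def Uop (f : C.Obj → ℚ) : C.Obj → ℚ := fun q => ∑ᶠ p : C.Obj, f p * C.uStep p q

noncomputable def Dop (f : C.Obj → ℚ) : C.Obj → ℚ := fun p => ∑ᶠ q : C.Obj, f q * C.dStep p q

end UDData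

namespace UCproof
open UDData

section Generic

variable {D E : UDData}

/-- cast a hom along equalities of both endpoints -/
def hc {p p' q q' : D.Obj} (hp : p = p') (hq : q = q') (f : D.Hom p q) : D.Hom p' q' :=
  hp ▸ hq ▸ f

@[simp] lemma hc_rfl {p q : D.Obj} (f : D.Hom p q) : hc rfl rfl f = f := rfl

lemma cast_eq_hc {p q q' : D.Obj} (h : q = q') (f : D.Hom p q) :
    UDData.cast h f = hc rfl h f := rfl

/-- package a hom with its endpoints -/
def t3 {s t : D.Obj} (f : D.Hom s t) : Σ s t : D.Obj, D.Hom s t := ⟨s, t, f⟩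

lemma t3_fst {s t s' t' : D.Obj} {f : D.Hom s t} {g : D.Hom s' t'}
    (h : t3 f = t3 g) : s = s' := congrArg Sigma.fst h

lemma t3_parts {s t s' t' : D.Obj} {f : D.Hom s t} {g : D.Hom s' t'}
    (h : t3 f = t3 g) : ∃ es : s = s', ∃ et : t = t', hc es et f = g := by
  have es : s = s' := congrArg Sigma.fst h
  subst es
  unfold t3 at h
  simp only [Sigma.mk.inj_iff] at h
  have h2 := eq_of_heq h.2
  have et : t = t' := congrArg Sigma.fst h2
  subst et
  simp only [Sigma.mk.inj_iff] at h2
  exact ⟨rfl, rfl, by simpa using eq_of_heq h2.2⟩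

lemma t3_snd {s t s' t' : D.Obj} {f : D.Hom s t} {g : D.Hom s' t'}
    (h : t3 f = t3 g) : t = t' := by
  obtain ⟨es, et, -⟩ := t3_parts h; exact et

lemma t3_of {s t s' t' : D.Obj} (es : s = s') (et : t = t') {f : D.Hom s t} {g : D.Hom s' t'}
    (h : hc es et f = g) : t3 f = t3 g := by
  subst es; subst et; subst h; rfl

lemma t3_out {s t : D.Obj} {f g : D.Hom s t} (h : t3 f = t3 g) : f = g := by
  obtain ⟨es, et, e⟩ := t3_parts h; exact e

lemma t3_hc {s t s' t' : D.Obj} (es : s = s') (et : t = t') (f : D.Hom s t) :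
    t3 (hc es et f) = t3 f := by subst es; subst et; rfl

lemma t3_comp {s t r s' t' r' : D.Obj} {f : D.Hom s t} {g : D.Hom t r}
    {f' : D.Hom s' t'} {g' : D.Hom t' r'}
    (h1 : t3 f = t3 f') (h2 : t3 g = t3 g') :
    t3 (D.comp f g) = t3 (D.comp f' g') := by
  obtain ⟨es, et, e⟩ := t3_parts h1
  subst es; subst et
  obtain ⟨et2, er, e2⟩ := t3_parts h2
  subst er
  simp only [hc_rfl] at e e2
  rw [e, e2]

lemma t3_map (F : Mor D E) {s t s' t' : D.Obj} {f : D.Hom s t} {g : D.Hom s' t'}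
    (h : t3 f = t3 g) : t3 (F.map f) = t3 (F.map g) := by
  obtain ⟨es, et, e⟩ := t3_parts h
  subst es; subst et
  simp only [hc_rfl] at e
  rw [e]

lemma t3_cast {p q q' : D.Obj} (h : q = q') (f : D.Hom p q) :
    t3 (UDData.cast h f) = t3 f := by subst h; rfl

end Generic

section ChainLemmas

variable {C : UDData}

/-- cast a chain along an equality of lengths -/
def chainCast {n m : ℕ} {p q : C.Obj} (e : n = m) (b : C.Chain n p q) : C.Chain m p q :=
  e ▸ b

lemma chain_rank : ∀ {n : ℕ} {p q : C.Obj} (_ : C.Chain n p q), C.rank q = C.rank p + n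
  | 0, p, q, b => by rw [← b.down]; omega
  | n + 1, p, q, b => by
    have h1 := chain_rank b.2.1
    have h2 := b.2.2.2
    omega

/-- truncation of a chain together with the residual morphism -/
def tr : ∀ {n : ℕ} {p q : C.Obj}, C.Chain n p q → ∀ m : ℕ, m ≤ n →
    Σ r : C.Obj, C.Chain m p r × C.Hom r q
  | 0, p, _, b, m, h =>
    ⟨p, chainCast (Nat.le_zero.mp h).symm (PLift.up rfl), UDData.cast b.down (C.idm p)⟩
  | n + 1, _, q, b, m, h =>
    if e : m = n + 1 then ⟨q, chainCast e.symm b, C.idm q⟩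
    else
      let t := tr b.2.1 m (by omega)
      ⟨t.1, t.2.1, C.comp t.2.2 b.2.2.1⟩

/-- packaged truncation (object + chain) -/
def trP {n : ℕ} {p q : C.Obj} (b : C.Chain n p q) (m : ℕ) (h : m ≤ n) :
    Σ r : C.Obj, C.Chain m p r := ⟨(tr b m h).1, (tr b m h).2.1⟩

/-- packaged residual -/
def trT {n : ℕ} {p q : C.Obj} (b : C.Chain n p q) (m : ℕ) (h : m ≤ n) :
    Σ s t : C.Obj, C.Hom s t := t3 (tr b m h).2.2

lemma tr_self : ∀ {n : ℕ} {p q : C.Obj} (b : C.Chain n p q) (h : n ≤ n),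
    tr b n h = ⟨q, b, C.idm q⟩
  | 0, p, q, b, h => by
    obtain ⟨e⟩ := b; subst e; rfl
  | n + 1, p, q, b, h => by
    show (if e : n + 1 = n + 1 then _ else _) = _
    rw [dif_pos rfl]; rfl

lemma tr_self' {n m : ℕ} {p q : C.Obj} (b : C.Chain n p q) (e : m = n) (h : m ≤ n) :
    tr b m h = ⟨q, chainCast e.symm b, C.idm q⟩ := by
  subst e; exact tr_self b h

lemma tr_step {n m : ℕ} {p q : C.Obj} (b : C.Chain (n + 1) p q) (h : m ≤ n + 1)
    (e : ¬ m = n + 1) (h' : m ≤ n) :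
    tr b m h = ⟨(tr b.2.1 m h').1, (tr b.2.1 m h').2.1,
      C.comp (tr b.2.1 m h').2.2 b.2.2.1⟩ := by
  show (if e : m = n + 1 then _ else _) = _
  rw [dif_neg e]

lemma tr_tr : ∀ {k : ℕ} {p q : C.Obj} (b : C.Chain k p q) (m n : ℕ)
    (hm : m ≤ n) (hn : n ≤ k),
    (⟨⟨(tr (tr b n hn).2.1 m hm).1, (tr (tr b n hn).2.1 m hm).2.1⟩,
        C.comp (tr (tr b n hn).2.1 m hm).2.2 (tr b n hn).2.2⟩ :
      Σ rc : Σ r : C.Obj, C.Chain m p r, C.Hom rc.1 q) =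
    ⟨⟨(tr b m (hm.trans hn)).1, (tr b m (hm.trans hn)).2.1⟩, (tr b m (hm.trans hn)).2.2⟩
  | 0, p, q, b, m, n, hm, hn => by
    obtain ⟨e⟩ := b; subst e
    obtain rfl : n = 0 := Nat.le_zero.mp hn
    obtain rfl : m = 0 := Nat.le_zero.mp hm
    show (⟨⟨p, PLift.up rfl⟩, C.comp (C.idm p) (C.idm p)⟩ :
        Σ rc : Σ r : C.Obj, C.Chain 0 p r, C.Hom rc.1 p) = ⟨⟨p, PLift.up rfl⟩, C.idm p⟩
    rw [C.comp_idm]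
  | k + 1, p, q, b, m, n, hm, hn => by
    by_cases e : n = k + 1
    · subst e
      rw [tr_self b hn]
      rw [C.comp_idm]
    · have hn' : n ≤ k := by omega
      rw [tr_step b hn e hn']
      by_cases em : m = k + 1
      · omega
      · have hm' : m ≤ k := hm.trans hn'
        rw [tr_step b (hm.trans hn) em hm']
        have IH := tr_tr b.2.1 m n hm hn'
        rw [← C.comp_assoc]
        exact congrArg (fun z : Σ rc : Σ r : C.Obj, C.Chain m p r, C.Hom rc.1 b.1 =>
          (⟨z.1, C.comp z.2 b.2.2.1⟩ : Σ rc : Σ r : C.Obj, C.Chain m p r, C.Hom rc.1 q)) IH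

lemma tr_tr_P {k : ℕ} {p q : C.Obj} (b : C.Chain k p q) (m n : ℕ)
    (hm : m ≤ n) (hn : n ≤ k) :
    trP (tr b n hn).2.1 m hm = trP b m (hm.trans hn) :=
  congrArg Sigma.fst (tr_tr b m n hm hn)

lemma tr_tr_T {k : ℕ} {p q : C.Obj} (b : C.Chain k p q) (m n : ℕ)
    (hm : m ≤ n) (hn : n ≤ k) :
    t3 (C.comp (tr (tr b n hn).2.1 m hm).2.2 (tr b n hn).2.2) =
      t3 (tr b m (hm.trans hn)).2.2 :=
  congrArg (fun z : Σ rc : Σ r : C.Obj, C.Chain m p r, C.Hom rc.1 q =>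
    (⟨z.1.1, q, z.2⟩ : Σ s t : C.Obj, C.Hom s t)) (tr_tr b m n hm hn)

lemma tr_zero_P : ∀ {n : ℕ} {p q : C.Obj} (b : C.Chain n p q) (h : 0 ≤ n),
    trP b 0 h = ⟨p, PLift.up rfl⟩
  | 0, p, q, b, h => by
    obtain ⟨e⟩ := b; subst e; rfl
  | n + 1, p, q, b, h => by
    have e : ¬ (0 : ℕ) = n + 1 := by omega
    unfold trP
    rw [tr_step b h e (Nat.zero_le n)]
    exact tr_zero_P b.2.1 (Nat.zero_le n)

end ChainLemmas

section MoreChain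

variable {C : UDData}

lemma tr_self_T {n : ℕ} {p q : C.Obj} (b : C.Chain n p q) (h : n ≤ n) :
    t3 (tr b n h).2.2 = t3 (C.idm q) :=
  congrArg (fun w : Σ r : C.Obj, C.Chain n p r × C.Hom r q =>
    (⟨w.1, q, w.2.2⟩ : Σ s t : C.Obj, C.Hom s t)) (tr_self b h)

lemma tr_self_T' {n m : ℕ} {p q : C.Obj} (b : C.Chain n p q) (e : m = n) (h : m ≤ n) :
    t3 (tr b m h).2.2 = t3 (C.idm q) := by subst e; exact tr_self_T b h

lemma tr_self_P {n : ℕ} {p q : C.Obj} (b : C.Chain n p q) (h : n ≤ n) :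
    trP b n h = ⟨q, b⟩ :=
  congrArg (fun w : Σ r : C.Obj, C.Chain n p r × C.Hom r q =>
    (⟨w.1, w.2.1⟩ : Σ r : C.Obj, C.Chain n p r)) (tr_self b h)

lemma tr_step_T {n m : ℕ} {p q : C.Obj} (b : C.Chain (n + 1) p q) (h : m ≤ n + 1)
    (e : ¬ m = n + 1) (h' : m ≤ n) :
    t3 (tr b m h).2.2 = t3 (C.comp (tr b.2.1 m h').2.2 b.2.2.1) := by
  rw [tr_step b h e h']

lemma tr_step_P {n m : ℕ} {p q : C.Obj} (b : C.Chain (n + 1) p q) (h : m ≤ n + 1)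
    (e : ¬ m = n + 1) (h' : m ≤ n) :
    trP b m h = trP b.2.1 m h' := by
  unfold trP; rw [tr_step b h e h']

lemma tr_congr_T {n m : ℕ} {p q₁ q₂ : C.Obj} {b₁ : C.Chain n p q₁} {b₂ : C.Chain n p q₂}
    (E : (⟨q₁, b₁⟩ : Σ r : C.Obj, C.Chain n p r) = ⟨q₂, b₂⟩) (h₁ : m ≤ n) (h₂ : m ≤ n) :
    t3 (tr b₁ m h₁).2.2 = t3 (tr b₂ m h₂).2.2 := by
  have : h₁ = h₂ := rfl
  subst this
  exact congrArg (fun w : Σ r : C.Obj, C.Chain n p r => t3 (tr w.2 m h₁).2.2) E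

lemma tr_congr_P {n m : ℕ} {p q₁ q₂ : C.Obj} {b₁ : C.Chain n p q₁} {b₂ : C.Chain n p q₂}
    (E : (⟨q₁, b₁⟩ : Σ r : C.Obj, C.Chain n p r) = ⟨q₂, b₂⟩) (h₁ : m ≤ n) (h₂ : m ≤ n) :
    trP b₁ m h₁ = trP b₂ m h₂ := by
  have : h₁ = h₂ := rfl
  subst this
  exact congrArg (fun w : Σ r : C.Obj, C.Chain n p r => trP w.2 m h₁) E

end MoreChain

section Cover

variable (C : UDData)

def UCovObj : Type := Σ n : ℕ, Σ q : C.Obj, C.Chain n C.zhat q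

def preOf (x y : UCovObj C) : Prop :=
  ∃ h : x.1 ≤ y.1, trP y.2.2 x.1 h = x.2

lemma ucov_sub (P : Prop) : Subsingleton (PLift P) :=
  ⟨fun a b => by cases a; cases b; rfl⟩

def UCov : UDData where
  Obj := UCovObj C
  Hom x y := PLift (preOf C x y)
  idm x := ⟨⟨le_rfl, tr_self_P x.2.2 le_rfl⟩⟩
  comp {x y z} f g := ⟨by
    obtain ⟨hf, ef⟩ := f.down
    obtain ⟨hg, eg⟩ := g.down
    refine ⟨hf.trans hg, ?_⟩
    have h1 := tr_tr_P z.2.2 x.1 y.1 hf hg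
    have h2 : trP (tr z.2.2 y.1 hg).2.1 x.1 hf = trP y.2.2 x.1 hf :=
      tr_congr_P eg hf hf
    rw [← h1, h2, ef]⟩
  idm_comp := fun {x y} f => (ucov_sub _).elim _ _
  comp_idm := fun {x y} f => (ucov_sub _).elim _ _
  comp_assoc := fun {x y z w} f g h => (ucov_sub _).elim _ _
  rank x := x.1
  zhat := ⟨0, C.zhat, PLift.up rfl⟩

lemma ucov_hom_sub (x y : (UCov C).Obj) : Subsingleton ((UCov C).Hom x y) :=
  ucov_sub _

def proj (hz : C.rank C.zhat = 0) : Mor (UCov C) C where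
  obj x := x.2.1
  map {x y} f :=
    hc (congrArg Sigma.fst f.down.choose_spec) rfl (tr y.2.2 x.1 f.down.choose).2.2
  map_idm := by
    intro p
    apply t3_out
    calc t3 (hc _ rfl (tr p.2.2 p.1 _).2.2) = t3 (tr p.2.2 p.1 _).2.2 := t3_hc _ _ _
    _ = t3 (C.idm p.2.1) := tr_self_T p.2.2 _
  map_comp := by
    intro x y z f g
    apply t3_out
    obtain ⟨hf, ef⟩ := f.down
    obtain ⟨hg, eg⟩ := g.down
    have E1 : t3 (C.comp (tr (tr z.2.2 y.1 hg).2.1 x.1 hf).2.2 (tr z.2.2 y.1 hg).2.2)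
        = t3 (tr z.2.2 x.1 (hf.trans hg)).2.2 := tr_tr_T z.2.2 x.1 y.1 hf hg
    have E2 : t3 (tr (tr z.2.2 y.1 hg).2.1 x.1 hf).2.2 = t3 (tr y.2.2 x.1 hf).2.2 :=
      tr_congr_T eg hf hf
    have e1 : t3 (hc (congrArg Sigma.fst (Exists.choose_spec (PLift.down f))) rfl
        (tr y.2.2 x.1 (Exists.choose (PLift.down f))).2.2) = t3 (tr y.2.2 x.1 hf).2.2 :=
      t3_hc _ _ _
    have e2 : t3 (hc (congrArg Sigma.fst (Exists.choose_spec (PLift.down g))) rfl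
        (tr z.2.2 y.1 (Exists.choose (PLift.down g))).2.2) = t3 (tr z.2.2 y.1 hg).2.2 :=
      t3_hc _ _ _
    calc t3 (hc (congrArg Sigma.fst (Exists.choose_spec (PLift.down ((UCov C).comp f g)))) rfl
        (tr z.2.2 x.1 (Exists.choose (PLift.down ((UCov C).comp f g)))).2.2)
        = t3 (tr z.2.2 x.1 (hf.trans hg)).2.2 := t3_hc _ _ _
      _ = t3 (C.comp (tr (tr z.2.2 y.1 hg).2.1 x.1 hf).2.2 (tr z.2.2 y.1 hg).2.2) := E1.symm
      _ = _ := t3_comp (E2.trans e1.symm) e2.symm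
  rank_eq := by
    intro p
    show C.rank p.2.1 = p.1
    have := chain_rank (C := C) p.2.2
    rw [hz] at this
    omega
end Cover

section CoverProps

variable (C : UDData)

lemma finite_of_sub {α : Type} [Subsingleton α] : Finite α :=
  Finite.of_injective (fun _ => ()) (fun a b _ => Subsingleton.elim a b)

lemma finT (hC : C.IsUpdown) : ∀ n : ℕ, Finite (Σ q : C.Obj, C.Chain n C.zhat q)
  | 0 => by
    have : Subsingleton (Σ q : C.Obj, C.Chain 0 C.zhat q) := by
      constructor
      rintro ⟨q, ⟨e⟩⟩ ⟨q', ⟨e'⟩⟩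
      subst e; subst e'; rfl
    exact finite_of_sub
  | n + 1 => by
    haveI := finT hC n
    haveI : Finite {q : C.Obj // C.rank q = n + 1} := (hC.rank_finite (n + 1)).to_subtype
    haveI : ∀ (x : Σ q : C.Obj, C.Chain n C.zhat q) (q : {q : C.Obj // C.rank q = n + 1}),
        Finite (C.Hom x.1 q.1) := fun x q => hC.hom_finite _ _
    refine Finite.of_injective (fun z : Σ q : C.Obj, C.Chain (n + 1) C.zhat q =>
      (⟨⟨z.2.1, z.2.2.1⟩, ⟨z.1, by
        have h1 := chain_rank (C := C) z.2.2.1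
        have h2 := z.2.2.2.2
        rw [hC.rank_zhat] at h1
        omega⟩, z.2.2.2.1⟩ :
        Σ (x : Σ q : C.Obj, C.Chain n C.zhat q) (q : {q : C.Obj // C.rank q = n + 1}),
          C.Hom x.1 q.1)) ?_
    rintro ⟨q, r, c, f, hf⟩ ⟨q', r', c', f', hf'⟩ h
    have h1 : (⟨r, c⟩ : Σ s : C.Obj, C.Chain n C.zhat s) = ⟨r', c'⟩ := congrArg Sigma.fst h
    obtain rfl : r = r' := congrArg Sigma.fst h1
    obtain rfl : c = c' := by simpa using h1
    have h2 : (⟨q, by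
        have h1 := chain_rank (C := C) c
        have h2 := hf
        rw [hC.rank_zhat] at h1
        omega⟩ : {q : C.Obj // C.rank q = n + 1}) = ⟨q', by
        have h1 := chain_rank (C := C) c
        have h2 := hf'
        rw [hC.rank_zhat] at h1
        omega⟩ :=
      congrArg (fun w : Σ (x : Σ s : C.Obj, C.Chain n C.zhat s)
        (q : {q : C.Obj // C.rank q = n + 1}), C.Hom x.1 q.1 => w.2.1) h
    obtain rfl : q = q' := congrArg Subtype.val h2
    obtain rfl : f = f' := by simpa using h
    rfl

def fibEquiv (n : ℕ) : {x : UCovObj C // x.1 = n} ≃ Σ q : C.Obj, C.Chain n C.zhat q where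
  toFun x := x.2 ▸ x.1.2
  invFun y := ⟨⟨n, y⟩, rfl⟩
  left_inv := by rintro ⟨⟨m, y⟩, rfl⟩; rfl
  right_inv y := rfl

lemma ucov_card (hC : C.IsUpdown) (n : ℕ) :
    Nat.card {x : (UCov C).Obj // (UCov C).rank x = n} = C.coverCard n :=
  Nat.card_congr (fibEquiv C n)

lemma ucov_updown (hC : C.IsUpdown) : (UCov C).IsUpdown where
  rank_finite := by
    intro n
    haveI := finT C hC n
    exact Set.finite_coe_iff.mp (Finite.of_equiv _ (fibEquiv C n).symm)
  hom_finite := fun x y => @finite_of_sub _ (ucov_hom_sub C x y)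
  rank_zhat := rfl
  zhat_unique := by
    rintro ⟨n, q, c⟩ h
    obtain rfl : n = 0 := h
    obtain ⟨e⟩ := c
    subst e
    rfl
  from_zhat := fun x => ⟨⟨⟨Nat.zero_le _, tr_zero_P x.2.2 (Nat.zero_le _)⟩⟩⟩
  hom_rank := by
    rintro ⟨m, p, a⟩ ⟨n, q, b⟩ ⟨⟨h, e⟩⟩
    rcases Nat.lt_or_ge m n with hlt | hge
    · exact Or.inl hlt
    · right
      obtain rfl : m = n := le_antisymm h hge
      have := (tr_self_P b h).symm.trans e
      exact (congrArg (Sigma.mk m) this).symm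
  aut_inv := fun p f => ⟨(UCov C).idm p, (ucov_sub _).elim _ _, (ucov_sub _).elim _ _⟩
  factor := by
    rintro x y ⟨⟨h, e⟩⟩ hlt
    have h1 : x.1 + 1 ≤ y.1 := hlt
    have hm : x.1 ≤ x.1 + 1 := Nat.le_succ _
    refine ⟨⟨x.1 + 1, trP y.2.2 (x.1 + 1) h1⟩,
      ⟨⟨hm, (tr_tr_P y.2.2 x.1 (x.1 + 1) hm h1).trans e⟩⟩, ⟨⟨h1, rfl⟩⟩, rfl,
      (ucov_sub _).elim _ _⟩
  pre_free := by
    intro p q _ a f _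
    exact (ucov_sub _).elim _ _
  post_free := by
    intro p q _ b f _
    exact (ucov_sub _).elim _ _

lemma ucov_univalent : (UCov C).Univalent := fun p => ucov_sub _

lemma ucov_chain_sub : ∀ (n : ℕ) (x y : (UCov C).Obj), Subsingleton ((UCov C).Chain n x y)
  | 0, x, y => ⟨by rintro ⟨a⟩ ⟨b⟩; rfl⟩
  | n + 1, x, y => by
    constructor
    rintro ⟨r, c, f, hf⟩ ⟨r', c', f', hf'⟩
    have hr : r = r' := by
      obtain ⟨hle, ee⟩ := f.down
      obtain ⟨hle', ee'⟩ := f'.down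
      obtain ⟨k, s⟩ := r
      obtain ⟨k', s'⟩ := r'
      obtain rfl : k = k' := by
        have e1 : y.1 = k + 1 := hf
        have e2 : y.1 = k' + 1 := hf'
        omega
      exact congrArg (Sigma.mk k) (ee.symm.trans ee')
    subst hr
    obtain rfl : c = c' := (ucov_chain_sub n x r).elim c c'
    obtain rfl : f = f' := (ucov_hom_sub C r y).elim f f'
    rfl

lemma ucov_simple : (UCov C).Simple :=
  ⟨fun x y => ucov_sub _, fun n x y => ucov_chain_sub C n x y⟩

lemma chain_cons : ∀ (k : ℕ) {p r q : C.Obj} (f : C.Hom p r)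
    (hf : C.rank r = C.rank p + 1) (c : C.Chain k r q), Nonempty (C.Chain (k + 1) p q)
  | 0, p, r, q, f, hf, c => by
    obtain ⟨e⟩ := c
    subst e
    exact ⟨⟨p, PLift.up rfl, f, hf⟩⟩
  | k + 1, p, r, q, f, hf, c => by
    obtain ⟨d⟩ := chain_cons k f hf c.2.1
    exact ⟨⟨c.1, d, c.2.2⟩⟩

lemma chain_of_hom (hC : C.IsUpdown) : ∀ (k : ℕ) {p q : C.Obj} (f : C.Hom p q),
    C.rank q = C.rank p + k → Nonempty (C.Chain k p q)
  | 0, p, q, f, hr => by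
    rcases hC.hom_rank p q ⟨f⟩ with h | h
    · omega
    · exact ⟨PLift.up h⟩
  | k + 1, p, q, f, hr => by
    obtain ⟨r, g, hmor, hrk, -⟩ := hC.factor f (by omega)
    obtain ⟨c⟩ := chain_of_hom hC k hmor (by omega)
    exact chain_cons C k g hrk c

lemma chain_exists (hC : C.IsUpdown) (p : C.Obj) :
    Nonempty (C.Chain (C.rank p) C.zhat p) := by
  obtain ⟨f⟩ := hC.from_zhat p
  exact chain_of_hom C hC _ f (by rw [hC.rank_zhat]; omega)

end CoverProps

section ProjCov

variable (C : UDData)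

lemma proj_map_key (hC : C.IsUpdown) (x : (UCov C).Obj) (q₀ : C.Obj)
    (f : C.Hom x.2.1 q₀) (hf : C.rank q₀ = C.rank x.2.1 + 1)
    (g : (UCov C).Hom x ⟨x.1 + 1, q₀, ⟨x.2.1, x.2.2, f, hf⟩⟩) :
    t3 ((proj C hC.rank_zhat).map g) = t3 f := by
  have start : t3 ((proj C hC.rank_zhat).map g)
      = t3 (tr (n := x.1 + 1) (p := C.zhat) (q := q₀) (⟨x.2.1, x.2.2, f, hf⟩ : C.Chain (x.1 + 1) C.zhat q₀) x.1
          g.down.choose).2.2 := by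
    show t3 (hc (congrArg Sigma.fst g.down.choose_spec) rfl
      (tr (n := x.1 + 1) (p := C.zhat) (q := q₀) (⟨x.2.1, x.2.2, f, hf⟩ : C.Chain (x.1 + 1) C.zhat q₀) x.1 g.down.choose).2.2) = _
    exact t3_hc _ _ _
  calc t3 ((proj C hC.rank_zhat).map g)
      = t3 (tr (n := x.1 + 1) (p := C.zhat) (q := q₀) (⟨x.2.1, x.2.2, f, hf⟩ : C.Chain (x.1 + 1) C.zhat q₀) x.1
          g.down.choose).2.2 := start
    _ = t3 (C.comp (tr x.2.2 x.1 le_rfl).2.2 f) :=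
        tr_step_T _ _ (Nat.ne_of_lt (Nat.lt_succ_self x.1)) le_rfl
    _ = t3 (C.comp (C.idm x.2.1) f) := t3_comp (tr_self_T x.2.2 le_rfl) rfl
    _ = t3 f := by rw [C.idm_comp]

lemma proj_cov (hC : C.IsUpdown) : (proj C hC.rank_zhat).IsCovering := by
  constructor
  · intro q
    obtain ⟨c⟩ := chain_exists C hC q
    exact ⟨⟨C.rank q, q, c⟩, rfl⟩
  · intro x y hr
    obtain ⟨xn, xq, xc⟩ := x
    obtain ⟨yn, yq, yb⟩ := y
    have h1 : yn = xn + 1 := hr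
    have hrx : C.rank xq = xn := (proj C hC.rank_zhat).rank_eq ⟨xn, xq, xc⟩
    have hry : C.rank yq = yn := (proj C hC.rank_zhat).rank_eq ⟨yn, yq, yb⟩
    constructor
    · -- injective
      rintro ⟨⟨⟨n₁, q₁, b₁⟩, e₁⟩, ⟨d₁⟩⟩ ⟨⟨⟨n₂, q₂, b₂⟩, e₂⟩, ⟨d₂⟩⟩ hval
      have ee₁ : yq = q₁ := e₁.symm
      subst ee₁
      have ee₂ : yq = q₂ := e₂.symm
      subst ee₂
      obtain rfl : n₁ = xn + 1 := by
        have := chain_rank (C := C) b₁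
        rw [hC.rank_zhat] at this
        omega
      obtain rfl : n₂ = xn + 1 := by
        have := chain_rank (C := C) b₂
        rw [hC.rank_zhat] at this
        omega
      obtain ⟨r₁, c₁, f₁, hf₁⟩ := b₁
      obtain ⟨r₂, c₂, f₂, hf₂⟩ := b₂
      have q1 : (⟨r₁, c₁⟩ : Σ r : C.Obj, C.Chain xn C.zhat r) = ⟨xq, xc⟩ :=
        (tr_self_P c₁ le_rfl).symm.trans
          ((tr_step_P (⟨r₁, c₁, f₁, hf₁⟩ : C.Chain (xn + 1) C.zhat yq) d₁.choose
            (Nat.ne_of_lt (Nat.lt_succ_self xn)) le_rfl).symm.trans d₁.choose_spec)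
      have q2 : (⟨r₂, c₂⟩ : Σ r : C.Obj, C.Chain xn C.zhat r) = ⟨xq, xc⟩ :=
        (tr_self_P c₂ le_rfl).symm.trans
          ((tr_step_P (⟨r₂, c₂, f₂, hf₂⟩ : C.Chain (xn + 1) C.zhat yq) d₂.choose
            (Nat.ne_of_lt (Nat.lt_succ_self xn)) le_rfl).symm.trans d₂.choose_spec)
      obtain rfl : xq = r₁ := (congrArg Sigma.fst q1).symm
      obtain rfl : xc = c₁ := (by simpa using q1 : c₁ = xc).symm
      obtain rfl : xq = r₂ := (congrArg Sigma.fst q2).symm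
      obtain rfl : xc = c₂ := (by simpa using q2 : c₂ = xc).symm
      have V : t3 f₁ = t3 f₂ := by
        calc t3 f₁
            = t3 ((proj C hC.rank_zhat).map (PLift.up d₁)) :=
              (proj_map_key C hC ⟨xn, xq, xc⟩ yq f₁ hf₁ (PLift.up d₁)).symm
          _ = t3 (UDData.cast e₁ ((proj C hC.rank_zhat).map (PLift.up d₁))) :=
              (t3_cast _ _).symm
          _ = t3 (UDData.cast e₂ ((proj C hC.rank_zhat).map (PLift.up d₂))) :=
              congrArg t3 hval
          _ = t3 f₂ := (t3_cast _ _).trans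
              (proj_map_key C hC ⟨xn, xq, xc⟩ yq f₂ hf₂ (PLift.up d₂))
      obtain rfl : f₁ = f₂ := t3_out V
      rfl
    · -- surjective
      intro f
      have hf : C.rank yq = C.rank xq + 1 := by rw [hrx, hry, h1]
      refine ⟨⟨⟨⟨xn + 1, yq, ⟨xq, xc, f, hf⟩⟩, rfl⟩,
        ⟨⟨Nat.le_succ _, (tr_step_P _ (Nat.le_succ xn)
          (Nat.ne_of_lt (Nat.lt_succ_self xn)) le_rfl).trans
          (tr_self_P xc le_rfl)⟩⟩⟩, ?_⟩
      apply t3_out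
      exact (t3_cast _ _).trans (proj_map_key C hC ⟨xn, xq, xc⟩ yq f hf _)

end ProjCov

section Lift

variable {C C' : UDData} {φ : Mor C' C}

lemma cast_trans {D : UDData} {p q q' q'' : D.Obj} (h : q = q') (h' : q' = q'')
    (f : D.Hom p q) :
    UDData.cast h' (UDData.cast h f) = UDData.cast (h.trans h') f := by
  subst h; subst h'; rfl

lemma step_lift (hs : Function.Surjective φ.obj)
    (hb : ∀ p q : C'.Obj, C'.rank q = C'.rank p + 1 →
      Function.Bijective fun x : (q' : {q' : C'.Obj // φ.obj q' = φ.obj q}) × C'.Hom p q'.1 =>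
        UDData.cast x.1.2 (φ.map x.2))
    (p' : C'.Obj) (q₀ : C.Obj) (hq : C.rank q₀ = C.rank (φ.obj p') + 1)
    (f₀ : C.Hom (φ.obj p') q₀) :
    ∃! z : Σ t : C'.Obj, C'.Hom p' t,
      ∃ e : φ.obj z.1 = q₀, UDData.cast e (φ.map z.2) = f₀ := by
  obtain ⟨q'', he⟩ := hs q₀
  have hr : C'.rank q'' = C'.rank p' + 1 := by
    have h1 := φ.rank_eq q''
    have h2 := φ.rank_eq p'
    rw [← he] at hq
    omega
  obtain ⟨hinj, hsur⟩ := hb p' q'' hr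
  obtain ⟨x, hx0⟩ := hsur (UDData.cast he.symm f₀)
  have hx : UDData.cast x.1.2 (φ.map x.2) = UDData.cast he.symm f₀ := hx0
  refine ⟨⟨x.1.1, x.2⟩, ⟨x.1.2.trans he, ?_⟩, ?_⟩
  · calc UDData.cast (x.1.2.trans he) (φ.map x.2)
        = UDData.cast he (UDData.cast x.1.2 (φ.map x.2)) := (cast_trans _ _ _).symm
      _ = UDData.cast he (UDData.cast he.symm f₀) := congrArg (UDData.cast he) hx
      _ = f₀ := (cast_trans _ _ _).trans rfl
  · rintro ⟨t, g⟩ ⟨e, hg⟩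
    have key : (⟨⟨t, e.trans he.symm⟩, g⟩ :
        (q' : {q' : C'.Obj // φ.obj q' = φ.obj q''}) × C'.Hom p' q'.1) = x := by
      apply hinj
      show UDData.cast (e.trans he.symm) (φ.map g) = UDData.cast x.1.2 (φ.map x.2)
      calc UDData.cast (e.trans he.symm) (φ.map g)
          = UDData.cast he.symm (UDData.cast e (φ.map g)) := (cast_trans _ _ _).symm
        _ = UDData.cast he.symm f₀ := by rw [hg]
        _ = UDData.cast x.1.2 (φ.map x.2) := hx.symm
    exact congrArg (fun w : (q' : {q' : C'.Obj // φ.obj q' = φ.obj q''}) × C'.Hom p' q'.1 =>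
      (⟨w.1.1, w.2⟩ : Σ t : C'.Obj, C'.Hom p' t)) key

variable (hs : Function.Surjective φ.obj)
  (hb : ∀ p q : C'.Obj, C'.rank q = C'.rank p + 1 →
    Function.Bijective fun x : (q' : {q' : C'.Obj // φ.obj q' = φ.obj q}) × C'.Hom p q'.1 =>
      UDData.cast x.1.2 (φ.map x.2))
  (hz : φ.obj C'.zhat = C.zhat)

noncomputable def slift (p' : C'.Obj) (q₀ : C.Obj)
    (hq : C.rank q₀ = C.rank (φ.obj p') + 1) (f₀ : C.Hom (φ.obj p') q₀) :
    Σ t : C'.Obj, C'.Hom p' t :=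
  (step_lift hs hb p' q₀ hq f₀).exists.choose

lemma slift_spec (p' : C'.Obj) (q₀ : C.Obj)
    (hq : C.rank q₀ = C.rank (φ.obj p') + 1) (f₀ : C.Hom (φ.obj p') q₀) :
    ∃ e : φ.obj (slift hs hb p' q₀ hq f₀).1 = q₀,
      UDData.cast e (φ.map (slift hs hb p' q₀ hq f₀).2) = f₀ :=
  (step_lift hs hb p' q₀ hq f₀).exists.choose_spec

lemma slift_obj (p' : C'.Obj) (q₀ : C.Obj)
    (hq : C.rank q₀ = C.rank (φ.obj p') + 1) (f₀ : C.Hom (φ.obj p') q₀) :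
    φ.obj (slift hs hb p' q₀ hq f₀).1 = q₀ :=
  (slift_spec hs hb p' q₀ hq f₀).choose

lemma slift_t3 (p' : C'.Obj) (q₀ : C.Obj)
    (hq : C.rank q₀ = C.rank (φ.obj p') + 1) (f₀ : C.Hom (φ.obj p') q₀) :
    t3 (φ.map (slift hs hb p' q₀ hq f₀).2) = t3 f₀ := by
  obtain ⟨e, he⟩ := slift_spec hs hb p' q₀ hq f₀
  exact (t3_cast e _).symm.trans (congrArg t3 he)

lemma slift_unique (p' : C'.Obj) (q₀ : C.Obj)
    (hq : C.rank q₀ = C.rank (φ.obj p') + 1) (f₀ : C.Hom (φ.obj p') q₀)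
    (t : C'.Obj) (g : C'.Hom p' t) (e : φ.obj t = q₀)
    (hg : UDData.cast e (φ.map g) = f₀) :
    (⟨t, g⟩ : Σ t : C'.Obj, C'.Hom p' t) = slift hs hb p' q₀ hq f₀ :=
  (step_lift hs hb p' q₀ hq f₀).unique ⟨e, hg⟩ (slift_spec hs hb p' q₀ hq f₀)

noncomputable def clift : ∀ {n : ℕ} {q : C.Obj}, C.Chain n C.zhat q →
    Σ' (t : C'.Obj) (_ : φ.obj t = q), C'.Chain n C'.zhat t
  | 0, q, b => ⟨C'.zhat, hz.trans b.down, PLift.up rfl⟩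
  | n + 1, q, b =>
    let x := clift b.2.1
    let s := slift hs hb x.1 q (by rw [x.2.1]; exact b.2.2.2) (hc x.2.1.symm rfl b.2.2.1)
    ⟨s.1, slift_obj hs hb _ _ _ _, ⟨x.1, x.2.2, s.2, by
      have h1 := φ.rank_eq s.1
      have h2 := φ.rank_eq x.1
      have h3 : φ.obj s.1 = q := slift_obj hs hb _ _ _ _
      have h4 : C.rank q = C.rank (φ.obj x.1) + 1 := by rw [x.2.1]; exact b.2.2.2
      rw [h3] at h1
      omega⟩⟩

noncomputable def cliftTop {n : ℕ} {q : C.Obj} (b : C.Chain (n + 1) C.zhat q) :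
    C'.Hom (clift hs hb hz b.2.1).1 (clift hs hb hz b).1 :=
  (clift hs hb hz b).2.2.2.2.1

lemma clift_fst_congr {n : ℕ} {q₁ q₂ : C.Obj} {b₁ : C.Chain n C.zhat q₁}
    {b₂ : C.Chain n C.zhat q₂}
    (E : (⟨q₁, b₁⟩ : Σ r : C.Obj, C.Chain n C.zhat r) = ⟨q₂, b₂⟩) :
    (clift hs hb hz b₁).1 = (clift hs hb hz b₂).1 :=
  congrArg (fun z : Σ r : C.Obj, C.Chain n C.zhat r => (clift hs hb hz z.2).1) E

lemma clift_len {n m : ℕ} {q : C.Obj} (e : n = m) (b : C.Chain n C.zhat q) :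
    (clift hs hb hz (chainCast e b)).1 = (clift hs hb hz b).1 := by subst e; rfl

lemma tr_self_P' {n m : ℕ} {p q : C.Obj} (b : C.Chain n p q) (e : m = n) (h : m ≤ n) :
    trP b m h = ⟨q, chainCast e.symm b⟩ := by
  subst e; exact tr_self_P b h

lemma hc_idm {D : UDData} {p p' : D.Obj} (h : p = p') :
    hc h h (D.idm p) = D.idm p' := by subst h; rfl

lemma t3_idm_congr {D : UDData} {p p' : D.Obj} (h : p = p') :
    t3 (D.idm p) = t3 (D.idm p') := by subst h; rfl

noncomputable def mlift : ∀ {n : ℕ} {q : C.Obj} (b : C.Chain n C.zhat q) (m : ℕ) (h : m ≤ n),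
    C'.Hom (clift hs hb hz (tr b m h).2.1).1 (clift hs hb hz b).1
  | 0, q, b, m, h =>
    hc (clift_len hs hb hz (Nat.le_zero.mp h).symm (PLift.up rfl)).symm rfl (C'.idm C'.zhat)
  | n + 1, q, b, m, h =>
    if e : m = n + 1 then
      hc ((clift_fst_congr hs hb hz (tr_self_P' b e h)).trans
        (clift_len hs hb hz e.symm b)).symm rfl (C'.idm (clift hs hb hz b).1)
    else
      hc (clift_fst_congr hs hb hz (tr_step_P b h e (by omega)).symm) rfl
        (C'.comp (mlift b.2.1 m (by omega)) ((clift hs hb hz b).2.2.2.2.1))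

lemma mlift_congr {n m : ℕ} {q₁ q₂ : C.Obj} {b₁ : C.Chain n C.zhat q₁}
    {b₂ : C.Chain n C.zhat q₂}
    (E : (⟨q₁, b₁⟩ : Σ r : C.Obj, C.Chain n C.zhat r) = ⟨q₂, b₂⟩)
    (h₁ : m ≤ n) (h₂ : m ≤ n) :
    t3 (mlift hs hb hz b₁ m h₁) = t3 (mlift hs hb hz b₂ m h₂) := by
  have : h₁ = h₂ := rfl
  subst this
  exact congrArg (fun z : Σ r : C.Obj, C.Chain n C.zhat r =>
    t3 (mlift hs hb hz z.2 m h₁)) E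

lemma mlift_self_t3 : ∀ {n m : ℕ} {q : C.Obj} (b : C.Chain n C.zhat q) (e : m = n)
    (h : m ≤ n), t3 (mlift hs hb hz b m h) = t3 (C'.idm (clift hs hb hz b).1)
  | 0, m, q, b, e, h => t3_hc _ _ _
  | n + 1, m, q, b, e, h => by
    rw [mlift, dif_pos e]
    exact t3_hc _ _ _

lemma mlift_step {n m : ℕ} {q : C.Obj} (b : C.Chain (n + 1) C.zhat q) (h : m ≤ n + 1)
    (e : ¬ m = n + 1) (h' : m ≤ n) :
    t3 (mlift hs hb hz b m h) =
      t3 (C'.comp (mlift hs hb hz b.2.1 m h') ((clift hs hb hz b).2.2.2.2.1)) := by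
  rw [mlift, dif_neg e]
  exact (t3_hc _ _ _).trans
    (t3_comp (mlift_congr hs hb hz rfl _ _) rfl)

lemma clift_top {n : ℕ} {q : C.Obj} (b : C.Chain (n + 1) C.zhat q) :
    t3 (φ.map ((clift hs hb hz b).2.2.2.2.1)) = t3 b.2.2.1 :=
  (slift_t3 hs hb _ _ _ _).trans (t3_hc _ _ _)

lemma phi_mlift : ∀ {n : ℕ} {q : C.Obj} (b : C.Chain n C.zhat q) (m : ℕ) (h : m ≤ n),
    t3 (φ.map (mlift hs hb hz b m h)) = t3 (tr b m h).2.2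
  | 0, q, b, m, h => by
    obtain ⟨e⟩ := b
    subst e
    calc t3 (φ.map (mlift hs hb hz (n := 0) (q := C.zhat) (PLift.up rfl) m h))
        = t3 (φ.map (C'.idm C'.zhat)) := t3_map φ (t3_hc _ _ _)
      _ = t3 (C.idm (φ.obj C'.zhat)) := by rw [φ.map_idm]
      _ = t3 (C.idm C.zhat) := t3_idm_congr hz
      _ = t3 (tr (n := 0) (p := C.zhat) (q := C.zhat) (PLift.up (rfl : C.zhat = C.zhat)) m h).2.2 := (t3_cast rfl (C.idm C.zhat)).symm
  | n + 1, q, b, m, h => by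
    by_cases e : m = n + 1
    · calc t3 (φ.map (mlift hs hb hz b m h))
          = t3 (φ.map (C'.idm (clift hs hb hz b).1)) :=
            t3_map φ (mlift_self_t3 hs hb hz b e h)
        _ = t3 (C.idm (φ.obj (clift hs hb hz b).1)) := by rw [φ.map_idm]
        _ = t3 (C.idm q) := t3_idm_congr (clift hs hb hz b).2.1
        _ = t3 (tr b m h).2.2 := (tr_self_T' b e h).symm
    · have h' : m ≤ n := by omega
      calc t3 (φ.map (mlift hs hb hz b m h))
          = t3 (φ.map (C'.comp (mlift hs hb hz b.2.1 m h')
              ((clift hs hb hz b).2.2.2.2.1))) := t3_map φ (mlift_step hs hb hz b h e h')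
        _ = t3 (C.comp (φ.map (mlift hs hb hz b.2.1 m h'))
              (φ.map ((clift hs hb hz b).2.2.2.2.1))) := congrArg t3 (φ.map_comp _ _)
        _ = t3 (C.comp (tr b.2.1 m h').2.2 b.2.2.1) :=
            t3_comp (phi_mlift b.2.1 m h') (clift_top hs hb hz b)
        _ = t3 (tr b m h).2.2 := (tr_step_T b h e h').symm

lemma mlift_comp : ∀ {k : ℕ} {q : C.Obj} (b : C.Chain k C.zhat q) (m n : ℕ)
    (hm : m ≤ n) (hn : n ≤ k),
    t3 (C'.comp (mlift hs hb hz (tr b n hn).2.1 m hm) (mlift hs hb hz b n hn)) =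
      t3 (mlift hs hb hz b m (hm.trans hn))
  | 0, q, b, m, n, hm, hn => by
    obtain ⟨e⟩ := b
    subst e
    obtain rfl : n = 0 := Nat.le_zero.mp hn
    obtain rfl : m = 0 := Nat.le_zero.mp hm
    calc t3 (C'.comp (mlift hs hb hz (tr (n := 0) (p := C.zhat) (q := C.zhat) (PLift.up (rfl : C.zhat = C.zhat)) 0 hn).2.1 0 hm)
          (mlift hs hb hz (n := 0) (q := C.zhat) (PLift.up rfl) 0 hn))
        = t3 (C'.comp (C'.idm C'.zhat) (C'.idm C'.zhat)) :=
          t3_comp (t3_hc _ _ _) (t3_hc _ _ _)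
      _ = t3 (C'.idm C'.zhat) := by rw [C'.idm_comp]
      _ = t3 (mlift hs hb hz (n := 0) (q := C.zhat) (PLift.up (rfl : C.zhat = C.zhat)) 0 (hm.trans hn)) :=
          (t3_hc _ _ _).symm
  | k + 1, q, b, m, n, hm, hn => by
    by_cases e : n = k + 1
    · subst e
      have E : trP b (k + 1) hn = ⟨q, b⟩ := tr_self_P b hn
      calc t3 (C'.comp (mlift hs hb hz (tr b (k + 1) hn).2.1 m hm) (mlift hs hb hz b (k + 1) hn))
          = t3 (C'.comp (mlift hs hb hz (tr b (k + 1) hn).2.1 m hm)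
              (C'.idm (clift hs hb hz (tr b (k + 1) hn).2.1).1)) :=
            t3_comp rfl ((mlift_self_t3 hs hb hz b rfl hn).trans
              (t3_idm_congr ((clift_fst_congr hs hb hz E).trans rfl).symm))
        _ = t3 (mlift hs hb hz (tr b (k + 1) hn).2.1 m hm) := by rw [C'.comp_idm]
        _ = t3 (mlift hs hb hz b m (hm.trans hn)) := mlift_congr hs hb hz E _ _
    · have hn' : n ≤ k := by omega
      have em : ¬ m = k + 1 := by omega
      have hm' : m ≤ k := hm.trans hn'
      calc t3 (C'.comp (mlift hs hb hz (tr b n hn).2.1 m hm) (mlift hs hb hz b n hn))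
          = t3 (C'.comp (mlift hs hb hz (tr b.2.1 n hn').2.1 m hm)
              (C'.comp (mlift hs hb hz b.2.1 n hn') ((clift hs hb hz b).2.2.2.2.1))) :=
            t3_comp (mlift_congr hs hb hz (tr_step_P b hn e hn') _ _)
              (mlift_step hs hb hz b hn e hn')
        _ = t3 (C'.comp (C'.comp (mlift hs hb hz (tr b.2.1 n hn').2.1 m hm)
              (mlift hs hb hz b.2.1 n hn')) ((clift hs hb hz b).2.2.2.2.1)) :=
            congrArg t3 (C'.comp_assoc _ _ _).symm
        _ = t3 (C'.comp (mlift hs hb hz b.2.1 m (hm.trans hn')) ((clift hs hb hz b).2.2.2.2.1)) :=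
            t3_comp (mlift_comp b.2.1 m n hm hn') rfl
        _ = t3 (mlift hs hb hz b m (hm.trans hn)) :=
          (mlift_step hs hb hz b (hm.trans hn) em hm').symm

noncomputable def psi (hz0 : C.rank C.zhat = 0) (hU' : C'.Univalent) :
    Mor (UCov C) C' where
  obj x := (clift hs hb hz x.2.2).1
  map {x y} g :=
    hc (clift_fst_congr hs hb hz g.down.choose_spec) rfl
      (mlift hs hb hz y.2.2 x.1 g.down.choose)
  map_idm p := (hU' _).elim _ _
  map_comp := by
    intro x y z f g
    apply t3_out
    obtain ⟨hf, ef⟩ := f.down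
    obtain ⟨hg, eg⟩ := g.down
    refine Eq.trans (t3_hc _ _ _)
      (Eq.trans (mlift_comp hs hb hz z.2.2 x.1 y.1 hf hg).symm ?_)
    exact t3_comp ((mlift_congr hs hb hz eg hf hf).trans (t3_hc _ _ _).symm)
      (t3_hc _ _ _).symm
  rank_eq := by
    intro x
    have h1 := φ.rank_eq (clift hs hb hz x.2.2).1
    have h2 : φ.obj (clift hs hb hz x.2.2).1 = x.2.1 := (clift hs hb hz x.2.2).2.1
    have h3 := chain_rank (C := C) x.2.2
    rw [h2] at h1
    rw [hz0] at h3
    show C'.rank (clift hs hb hz x.2.2).1 = x.1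
    omega

def pushc : ∀ {n : ℕ} {q' : C'.Obj}, C'.Chain n C'.zhat q' → C.Chain n C.zhat (φ.obj q')
  | 0, q', c => PLift.up (hz.symm.trans (congrArg φ.obj c.down))
  | n + 1, q', c =>
    ⟨φ.obj c.1, pushc c.2.1, φ.map c.2.2.1, by
      rw [φ.rank_eq, φ.rank_eq]; exact c.2.2.2⟩

lemma lift_push : ∀ {n : ℕ} {q' : C'.Obj} (c : C'.Chain n C'.zhat q'),
    (clift hs hb hz (pushc hz c)).1 = q'
  | 0, q', c => by
    obtain ⟨e⟩ := c
    subst e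
    rfl
  | n + 1, q', c => by
    have IH := lift_push c.2.1
    have val : UDData.cast (rfl : φ.obj q' = φ.obj q')
        (φ.map (hc IH.symm rfl c.2.2.1)) =
        hc ((clift hs hb hz (pushc hz c.2.1)).2.1).symm rfl (φ.map c.2.2.1) :=
      t3_out ((t3_map φ (t3_hc _ _ _)).trans (t3_hc _ _ _).symm)
    have U := slift_unique hs hb (clift hs hb hz (pushc hz c.2.1)).1 (φ.obj q')
      (by rw [(clift hs hb hz (pushc hz c.2.1)).2.1, φ.rank_eq, φ.rank_eq]
          exact c.2.2.2)
      (hc ((clift hs hb hz (pushc hz c.2.1)).2.1).symm rfl (φ.map c.2.2.1))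
      q' (hc IH.symm rfl c.2.2.1) rfl val
    exact (congrArg Sigma.fst U).symm

lemma mor_ext {A B : UDData} {F G : Mor A B}
    (h2 : ∀ {x y : A.Obj} (g : A.Hom x y), t3 (F.map g) = t3 (G.map g))
    (h : ∀ x, F.obj x = G.obj x) : F = G := by
  obtain ⟨Fo, Fm, Fi, Fc, Fr⟩ := F
  obtain ⟨Go, Gm, Gi, Gc, Gr⟩ := G
  obtain rfl : Fo = Go := funext h
  have : @Fm = @Gm := by
    funext x y g
    exact t3_out (h2 g)
  subst this
  rfl

lemma psi_map_t3 (hz0 : C.rank C.zhat = 0) (hU' : C'.Univalent)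
    {x y : (UCov C).Obj} (g : (UCov C).Hom x y) :
    t3 ((psi hs hb hz hz0 hU').map g) =
      t3 (mlift hs hb hz y.2.2 x.1 g.down.choose) := by
  show t3 (hc (clift_fst_congr hs hb hz g.down.choose_spec) rfl
    (mlift hs hb hz y.2.2 x.1 g.down.choose)) = _
  exact t3_hc _ _ _

lemma psi_comp_proj (hC : C.IsUpdown) (hU' : C'.Univalent) :
    (psi hs hb hz hC.rank_zhat hU').comp φ = proj C hC.rank_zhat := by
  apply mor_ext
  · intro x y g
    have pm : t3 ((proj C hC.rank_zhat).map g) = t3 (tr y.2.2 x.1 g.down.choose).2.2 := by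
      show t3 (hc (congrArg Sigma.fst g.down.choose_spec) rfl
        (tr y.2.2 x.1 g.down.choose).2.2) = _
      exact t3_hc _ _ _
    calc t3 (((psi hs hb hz hC.rank_zhat hU').comp φ).map g)
        = t3 (φ.map ((psi hs hb hz hC.rank_zhat hU').map g)) := rfl
      _ = t3 (φ.map (mlift hs hb hz y.2.2 x.1 g.down.choose)) :=
          t3_map φ (psi_map_t3 hs hb hz hC.rank_zhat hU' g)
      _ = t3 (tr y.2.2 x.1 g.down.choose).2.2 := phi_mlift hs hb hz y.2.2 x.1 _
      _ = t3 ((proj C hC.rank_zhat).map g) := pm.symm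
  · intro x
    exact (clift hs hb hz x.2.2).2.1

lemma psi_cov (hC : C.IsUpdown) (hC' : C'.IsUpdown) (hU' : C'.Univalent) :
    (psi hs hb hz hC.rank_zhat hU').IsCovering := by
  constructor
  · intro p'
    obtain ⟨c⟩ := chain_exists C' hC' p'
    exact ⟨⟨C'.rank p', φ.obj p', pushc hz c⟩, lift_push hs hb hz c⟩
  · intro x y hr
    obtain ⟨xn, xq, xc⟩ := x
    obtain ⟨yn, yq, yb⟩ := y
    have h1 : yn = xn + 1 := hr
    have hrx : C.rank xq = xn := by
      have := chain_rank (C := C) xc; rw [hC.rank_zhat] at this; omega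
    have hry : C.rank yq = yn := by
      have := chain_rank (C := C) yb; rw [hC.rank_zhat] at this; omega
    have exq : φ.obj (clift hs hb hz xc).1 = xq := (clift hs hb hz xc).2.1
    have key : ∀ (q₀ : C.Obj) (f : C.Hom xq q₀) (hf : C.rank q₀ = C.rank xq + 1)
        (g : (UCov C).Hom ⟨xn, xq, xc⟩ ⟨xn + 1, q₀, ⟨xq, xc, f, hf⟩⟩),
        t3 ((psi hs hb hz hC.rank_zhat hU').map g) =
          t3 (cliftTop hs hb hz (⟨xq, xc, f, hf⟩ : C.Chain (xn + 1) C.zhat q₀)) := by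
      intro q₀ f hf g
      calc t3 ((psi hs hb hz hC.rank_zhat hU').map g)
          = t3 (mlift hs hb hz (n := xn + 1) (q := q₀) (⟨xq, xc, f, hf⟩ : C.Chain (xn + 1) C.zhat q₀) xn
              g.down.choose) := psi_map_t3 hs hb hz hC.rank_zhat hU' g
        _ = t3 (C'.comp (mlift hs hb hz xc xn le_rfl)
              (cliftTop hs hb hz (⟨xq, xc, f, hf⟩ : C.Chain (xn + 1) C.zhat q₀))) :=
            mlift_step hs hb hz _ g.down.choose (Nat.ne_of_lt (Nat.lt_succ_self xn)) le_rfl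
        _ = t3 (C'.comp (C'.idm (clift hs hb hz xc).1)
              (cliftTop hs hb hz (⟨xq, xc, f, hf⟩ : C.Chain (xn + 1) C.zhat q₀))) :=
            t3_comp (mlift_self_t3 hs hb hz xc rfl le_rfl) rfl
        _ = t3 (cliftTop hs hb hz (⟨xq, xc, f, hf⟩ : C.Chain (xn + 1) C.zhat q₀)) := by
            rw [C'.idm_comp]
    constructor
    · -- injective
      rintro ⟨⟨⟨n₁, q₁, b₁⟩, e₁⟩, ⟨d₁⟩⟩ ⟨⟨⟨n₂, q₂, b₂⟩, e₂⟩, ⟨d₂⟩⟩ hval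
      obtain rfl : n₁ = xn + 1 := by
        have r1 : C'.rank ((psi hs hb hz hC.rank_zhat hU').obj ⟨n₁, q₁, b₁⟩) = n₁ :=
          (psi hs hb hz hC.rank_zhat hU').rank_eq ⟨n₁, q₁, b₁⟩
        have r2 : C'.rank ((psi hs hb hz hC.rank_zhat hU').obj ⟨yn, yq, yb⟩) = yn :=
          (psi hs hb hz hC.rank_zhat hU').rank_eq ⟨yn, yq, yb⟩
        have r3 := congrArg C'.rank e₁
        omega
      obtain rfl : n₂ = xn + 1 := by
        have r1 : C'.rank ((psi hs hb hz hC.rank_zhat hU').obj ⟨n₂, q₂, b₂⟩) = n₂ :=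
          (psi hs hb hz hC.rank_zhat hU').rank_eq ⟨n₂, q₂, b₂⟩
        have r2 : C'.rank ((psi hs hb hz hC.rank_zhat hU').obj ⟨yn, yq, yb⟩) = yn :=
          (psi hs hb hz hC.rank_zhat hU').rank_eq ⟨yn, yq, yb⟩
        have r3 := congrArg C'.rank e₂
        omega
      obtain ⟨r₁, c₁, f₁, hf₁⟩ := b₁
      obtain ⟨r₂, c₂, f₂, hf₂⟩ := b₂
      have q1 : (⟨r₁, c₁⟩ : Σ r : C.Obj, C.Chain xn C.zhat r) = ⟨xq, xc⟩ :=
        (tr_self_P c₁ le_rfl).symm.trans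
          ((tr_step_P (⟨r₁, c₁, f₁, hf₁⟩ : C.Chain (xn + 1) C.zhat q₁) d₁.choose
            (Nat.ne_of_lt (Nat.lt_succ_self xn)) le_rfl).symm.trans d₁.choose_spec)
      have q2 : (⟨r₂, c₂⟩ : Σ r : C.Obj, C.Chain xn C.zhat r) = ⟨xq, xc⟩ :=
        (tr_self_P c₂ le_rfl).symm.trans
          ((tr_step_P (⟨r₂, c₂, f₂, hf₂⟩ : C.Chain (xn + 1) C.zhat q₂) d₂.choose
            (Nat.ne_of_lt (Nat.lt_succ_self xn)) le_rfl).symm.trans d₂.choose_spec)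
      obtain rfl : xq = r₁ := (congrArg Sigma.fst q1).symm
      obtain rfl : xc = c₁ := (by simpa using q1 : c₁ = xc).symm
      obtain rfl : xq = r₂ := (congrArg Sigma.fst q2).symm
      obtain rfl : xc = c₂ := (by simpa using q2 : c₂ = xc).symm
      have W : ∀ (q₀ : C.Obj) (f : C.Hom xq q₀) (hf : C.rank q₀ = C.rank xq + 1)
          (g : (UCov C).Hom ⟨xn, xq, xc⟩ ⟨xn + 1, q₀, ⟨xq, xc, f, hf⟩⟩)
          (e : (psi hs hb hz hC.rank_zhat hU').obj ⟨xn + 1, q₀, ⟨xq, xc, f, hf⟩⟩ =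
            (psi hs hb hz hC.rank_zhat hU').obj ⟨yn, yq, yb⟩),
          t3 (φ.map (UDData.cast e ((psi hs hb hz hC.rank_zhat hU').map g))) = t3 f := by
        intro q₀ f hf g e
        calc t3 (φ.map (UDData.cast e ((psi hs hb hz hC.rank_zhat hU').map g)))
            = t3 (φ.map ((psi hs hb hz hC.rank_zhat hU').map g)) :=
              t3_map φ (t3_cast e _)
          _ = t3 (φ.map (mlift hs hb hz (n := xn + 1) (q := q₀) (⟨xq, xc, f, hf⟩ : C.Chain (xn + 1) C.zhat q₀) xn
              g.down.choose)) := t3_map φ (psi_map_t3 hs hb hz hC.rank_zhat hU' g)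
          _ = t3 (tr (n := xn + 1) (p := C.zhat) (q := q₀) (⟨xq, xc, f, hf⟩ : C.Chain (xn + 1) C.zhat q₀) xn g.down.choose).2.2 :=
              phi_mlift hs hb hz _ xn _
          _ = t3 (C.comp (tr xc xn le_rfl).2.2 f) :=
              tr_step_T _ _ (Nat.ne_of_lt (Nat.lt_succ_self xn)) le_rfl
          _ = t3 (C.comp (C.idm xq) f) := t3_comp (tr_self_T xc le_rfl) rfl
          _ = t3 f := by rw [C.idm_comp]
      have hval' : UDData.cast e₁ ((psi hs hb hz hC.rank_zhat hU').map (PLift.up d₁)) =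
          UDData.cast e₂ ((psi hs hb hz hC.rank_zhat hU').map (PLift.up d₂)) := hval
      have V : t3 f₁ = t3 f₂ :=
        (W q₁ f₁ hf₁ (PLift.up d₁) e₁).symm.trans
          ((congrArg (fun v => t3 (φ.map v)) hval').trans (W q₂ f₂ hf₂ (PLift.up d₂) e₂))
      obtain rfl : q₁ = q₂ := t3_snd V
      obtain rfl : f₁ = f₂ := t3_out V
      rfl
    · -- surjective
      intro f'
      have hf : C.rank yq = C.rank xq + 1 := by rw [hrx, hry, h1]
      have hq0 : C.rank yq = C.rank (φ.obj (clift hs hb hz xc).1) + 1 := by rw [exq]; exact hf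
      have val : UDData.cast ((clift hs hb hz yb).2.1) (φ.map f') =
          hc exq.symm rfl (hc exq (clift hs hb hz yb).2.1 (φ.map f')) :=
        t3_out ((t3_cast _ _).trans ((t3_hc _ _ _).trans (t3_hc _ _ _)).symm)
      have U := slift_unique hs hb (clift hs hb hz xc).1 yq hq0
        (hc exq.symm rfl (hc exq (clift hs hb hz yb).2.1 (φ.map f')))
        ((psi hs hb hz hC.rank_zhat hU').obj ⟨yn, yq, yb⟩) f'
        ((clift hs hb hz yb).2.1) val
      have E : (psi hs hb hz hC.rank_zhat hU').obj
          ⟨xn + 1, yq, ⟨xq, xc, hc exq (clift hs hb hz yb).2.1 (φ.map f'), hf⟩⟩ =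
          (psi hs hb hz hC.rank_zhat hU').obj ⟨yn, yq, yb⟩ :=
        (congrArg Sigma.fst U).symm
      refine ⟨⟨⟨⟨xn + 1, yq, ⟨xq, xc, hc exq (clift hs hb hz yb).2.1 (φ.map f'), hf⟩⟩, E⟩,
        ⟨⟨Nat.le_succ xn, (tr_step_P _ (Nat.le_succ xn)
          (Nat.ne_of_lt (Nat.lt_succ_self xn)) le_rfl).trans (tr_self_P xc le_rfl)⟩⟩⟩, ?_⟩
      apply t3_out
      calc t3 (UDData.cast E ((psi hs hb hz hC.rank_zhat hU').map _))
          = t3 ((psi hs hb hz hC.rank_zhat hU').map _) := t3_cast E _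
        _ = t3 (cliftTop hs hb hz (⟨xq, xc, hc exq (clift hs hb hz yb).2.1 (φ.map f'), hf⟩ :
            C.Chain (xn + 1) C.zhat yq)) := key yq _ hf _
        _ = t3 f' := (congrArg (fun z : Σ t : C'.Obj, C'.Hom (clift hs hb hz xc).1 t =>
            t3 z.2) U).symm

end Lift

end UCproof

theorem univalent_has_universal_cover (C : UDData) (hC : C.IsUpdown) (hU : C.Univalent) :
    ∃ (Ct : UDData) (π : UDData.Mor Ct C),
      Ct.IsUpdown ∧ Ct.Univalent ∧ Ct.Simple ∧
      (∀ n : ℕ, Nat.card {x : Ct.Obj // Ct.rank x = n} = C.coverCard n) ∧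
      π.IsCovering ∧
      ∀ (C' : UDData) (φ : UDData.Mor C' C), C'.IsUpdown → C'.Univalent → φ.IsCovering →
        ∃ ψ : UDData.Mor Ct C', ψ.IsCovering ∧ ψ.comp φ = π := by
  refine ⟨UCproof.UCov C, UCproof.proj C hC.rank_zhat, UCproof.ucov_updown C hC,
    UCproof.ucov_univalent C, UCproof.ucov_simple C, UCproof.ucov_card C hC,
    UCproof.proj_cov C hC, ?_⟩
  intro C' φ hC' hU' hφ
  obtain ⟨hsur, hbij⟩ := hφ
  have hz : φ.obj C'.zhat = C.zhat :=
    hC.zhat_unique _ (by rw [φ.rank_eq, hC'.rank_zhat])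
  exact ⟨UCproof.psi hsur hbij hz hC.rank_zhat hU',
    UCproof.psi_cov hsur hbij hz hC hC' hU',
    UCproof.psi_comp_proj hsur hbij hz hC hU'⟩
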